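/- Let π and β be policies with β(a|z) > 0 for all (z,a), let Q : Z × A → ℝ satisfy |Q(z,a)| ≤ M for all (z,a), and let ε ≥ 0 satisfy D_KL(π(·|z) ‖ β(·|z)) ≤ ε for all z ∈ Z. Then for every (z,a) ∈ Z × A, |(T^π Q)(z,a) − (T^β Q)(z,a)| ≤ γ · M · √(2ε). -/

import Mathlib

open scoped BigOperators

/-- The Bellman evaluation operator of policy `μpol`:
`(T^μ Q)(z,a) = R(z,a) + γ · Σ_{a'} μ(a'|F(z,a)) · Q(F(z,a), a')`. -/
noncomputable def bellman {Z A : Type*} [Fintype A]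
    (F : Z × A → Z) (R : Z × A → ℝ) (γ : ℝ)
    (μpol : Z → A → ℝ) (Q : Z × A → ℝ) : Z × A → ℝ :=
  fun p => R p + γ * ∑ a' : A, μpol (F p) a' * Q (F p, a')

/-- Kullback–Leibler divergence between probability mass functions on a finite
type (with the convention `0 · log 0 = 0`, automatic since `Real.log 0 = 0`). -/
noncomputable def klFin {A : Type*} [Fintype A] (p q : A → ℝ) : ℝ :=
  ∑ a : A, p a * Real.log (p a / q a)

private noncomputable def pinF (x : ℝ) : ℝ :=
  x * Real.log x - x + 1 - 3/2 * ((x-1)^2 / (x+2))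

private noncomputable def pinG (x : ℝ) : ℝ :=
  Real.log x - 3/2 * ((x-1)*(x+5) / (x+2)^2)

private lemma hasDerivAt_pinF {x : ℝ} (hx : 0 < x) : HasDerivAt pinF (pinG x) x := by
  have hne : x + 2 ≠ 0 := by linarith
  have h1 : HasDerivAt (fun y : ℝ => y * Real.log y) (Real.log x + 1) x := by
    have := (hasDerivAt_id x).mul (Real.hasDerivAt_log hx.ne')
    simpa [id, Pi.mul_def] using this.congr_deriv (by simp [id, hx.ne'])
  have h2 : HasDerivAt (fun y : ℝ => (y-1)^2 / (y+2))
      ((2*(x-1)*(x+2) - (x-1)^2 * 1) / (x+2)^2) x := by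
    have hn : HasDerivAt (fun y : ℝ => (y-1)^2) (2*(x-1)) x := by
      have := ((hasDerivAt_id x).sub_const 1).pow 2
      simpa [id, Pi.mul_def, Pi.pow_def] using this.congr_deriv (by simp [id]; try ring)
    have hd : HasDerivAt (fun y : ℝ => y + 2) 1 x := (hasDerivAt_id x).add_const 2
    exact hn.div hd hne
  have h3 := ((h1.sub (hasDerivAt_id x)).add_const 1).sub (h2.const_mul (3/2 : ℝ))
  exact h3.congr_deriv (by unfold pinG; field_simp; ring)

private lemma hasDerivAt_pinG {x : ℝ} (hx : 0 < x) :
    HasDerivAt pinG (x⁻¹ - 27/(x+2)^3) x := by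
  have hne : x + 2 ≠ 0 := by linarith
  have h2 : HasDerivAt (fun y : ℝ => (y-1)*(y+5) / (y+2)^2)
      (((2*x+4)*(x+2)^2 - (x-1)*(x+5)*(2*(x+2))) / ((x+2)^2)^2) x := by
    have hn : HasDerivAt (fun y : ℝ => (y-1)*(y+5)) (2*x+4) x := by
      have := ((hasDerivAt_id x).sub_const 1).mul ((hasDerivAt_id x).add_const 5)
      simpa [id, Pi.mul_def, Pi.pow_def] using this.congr_deriv (by simp [id]; try ring)
    have hd : HasDerivAt (fun y : ℝ => (y+2)^2) (2*(x+2)) x := by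
      have := ((hasDerivAt_id x).add_const 2).pow 2
      simpa [id, Pi.mul_def, Pi.pow_def] using this.congr_deriv (by simp [id]; try ring)
    exact hn.div hd (pow_ne_zero 2 hne)
  have h3 := (Real.hasDerivAt_log hx.ne').sub (h2.const_mul (3/2 : ℝ))
  exact h3.congr_deriv (by field_simp; ring)

private lemma pinF_nonneg {x : ℝ} (hx : 0 < x) : 0 ≤ pinF x := by
  have hG1 : pinG 1 = 0 := by unfold pinG; norm_num
  have hF1 : pinF 1 = 0 := by unfold pinF; norm_num
  have hGmono : MonotoneOn pinG (Set.Ioi (0:ℝ)) := by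
    apply monotoneOn_of_deriv_nonneg (convex_Ioi 0)
    · exact fun y hy => (hasDerivAt_pinG hy).continuousAt.continuousWithinAt
    · intro y hy
      rw [interior_Ioi] at hy
      exact (hasDerivAt_pinG hy).differentiableAt.differentiableWithinAt
    · intro y hy
      rw [interior_Ioi] at hy
      rw [(hasDerivAt_pinG hy).deriv]
      have hy0 : (0:ℝ) < y := hy
      have h2p : (0:ℝ) < y + 2 := by linarith
      rw [sub_nonneg, inv_eq_one_div, div_le_div_iff₀ (pow_pos h2p 3) hy0]
      nlinarith [sq_nonneg (y-1)]
  rcases le_or_gt 1 x with h1 | h1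
  · have hm : MonotoneOn pinF (Set.Ici (1:ℝ)) := by
      apply monotoneOn_of_deriv_nonneg (convex_Ici 1)
      · exact fun y hy => (hasDerivAt_pinF (by linarith [hy.out])).continuousAt.continuousWithinAt
      · intro y hy
        rw [interior_Ici] at hy
        exact (hasDerivAt_pinF (by linarith [hy.out])).differentiableAt.differentiableWithinAt
      · intro y hy
        rw [interior_Ici] at hy
        have hy1 : (1:ℝ) < y := hy
        rw [(hasDerivAt_pinF (by linarith)).deriv]
        calc (0:ℝ) = pinG 1 := hG1.symm
          _ ≤ pinG y := hGmono (by norm_num) (Set.mem_Ioi.mpr (by linarith)) hy1.le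
    calc (0:ℝ) = pinF 1 := hF1.symm
      _ ≤ pinF x := hm (by norm_num) h1 h1
  · have hm : AntitoneOn pinF (Set.Ioc (0:ℝ) 1) := by
      apply antitoneOn_of_deriv_nonpos (convex_Ioc 0 1)
      · exact fun y hy => (hasDerivAt_pinF hy.1).continuousAt.continuousWithinAt
      · intro y hy
        rw [interior_Ioc] at hy
        exact (hasDerivAt_pinF hy.1).differentiableAt.differentiableWithinAt
      · intro y hy
        rw [interior_Ioc] at hy
        rw [(hasDerivAt_pinF hy.1).deriv]
        calc pinG y ≤ pinG 1 := hGmono (Set.mem_Ioi.mpr hy.1) (by norm_num) hy.2.le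
          _ = 0 := hG1
    calc (0:ℝ) = pinF 1 := hF1.symm
      _ ≤ pinF x := hm (Set.mem_Ioc.mpr ⟨hx, h1.le⟩) (by norm_num) h1.le

private lemma pointwise_bound {p q : ℝ} (hp : 0 ≤ p) (hq : 0 < q) :
    3/2 * ((p-q)^2 / (p+2*q)) ≤ p * Real.log (p/q) - p + q := by
  rcases eq_or_lt_of_le hp with h0 | hp0
  · rw [← h0]
    have h3 : 3/2 * (((0:ℝ)-q)^2/(0+2*q)) = 3/4 * q := by
      field_simp [hq.ne']; ring
    rw [h3]
    simp
    linarith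
  · have hx : 0 < p / q := div_pos hp0 hq
    have key := pinF_nonneg hx
    unfold pinF at key
    have hd1 : p + 2*q ≠ 0 := by positivity
    have h1 : p * Real.log (p/q) - p + q
        = q * ((p/q) * Real.log (p/q) - (p/q) + 1) := by
      field_simp
    have h2 : (p-q)^2 / (p+2*q) = q * ((p/q - 1)^2 / (p/q + 2)) := by
      field_simp
    rw [h1, h2]
    nlinarith [mul_nonneg hq.le key]

/-- Finite Pinsker inequality. -/
private lemma pinsker {A : Type*} [Fintype A] (p q : A → ℝ)
    (hp0 : ∀ a, 0 ≤ p a) (hp1 : ∑ a : A, p a = 1)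
    (hq0 : ∀ a, 0 < q a) (hq1 : ∑ a : A, q a = 1) :
    (∑ a : A, |p a - q a|)^2 ≤ 2 * klFin p q := by
  have hkey : ∑ a : A, (p a - q a)^2 / (p a + 2*q a) ≤ 2/3 * klFin p q := by
    have h1 : ∑ a : A, 3/2 * ((p a - q a)^2 / (p a + 2*q a)) ≤
        ∑ a : A, (p a * Real.log (p a / q a) - p a + q a) :=
      Finset.sum_le_sum fun a _ => pointwise_bound (hp0 a) (hq0 a)
    have h2 : ∑ a : A, (p a * Real.log (p a / q a) - p a + q a) = klFin p q := by
      simp [Finset.sum_sub_distrib, Finset.sum_add_distrib, hp1, hq1, klFin]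
    rw [h2] at h1
    rw [← Finset.mul_sum] at h1
    linarith
  have hCS := Finset.sum_mul_sq_le_sq_mul_sq Finset.univ
    (fun a => |p a - q a| / Real.sqrt (p a + 2*q a))
    (fun a => Real.sqrt (p a + 2*q a))
  have hs : ∀ a : A, (0:ℝ) < p a + 2*q a := fun a => by
    have := hp0 a; have := hq0 a; linarith
  have e1 : ∀ a : A, |p a - q a| / Real.sqrt (p a + 2*q a) * Real.sqrt (p a + 2*q a)
      = |p a - q a| := fun a =>
    div_mul_cancel₀ _ (Real.sqrt_ne_zero'.mpr (hs a))
  have e2 : ∀ a : A, (|p a - q a| / Real.sqrt (p a + 2*q a))^2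
      = (p a - q a)^2 / (p a + 2*q a) := fun a => by
    rw [div_pow, sq_abs, Real.sq_sqrt (hs a).le]
  have e3 : ∀ a : A, (Real.sqrt (p a + 2*q a))^2 = p a + 2*q a := fun a =>
    Real.sq_sqrt (hs a).le
  simp only [e1, e2, e3] at hCS
  have e4 : ∑ a : A, (p a + 2*q a) = 3 := by
    rw [Finset.sum_add_distrib, hp1, ← Finset.mul_sum, hq1]; norm_num
  rw [e4] at hCS
  calc (∑ a : A, |p a - q a|)^2
      ≤ (∑ a : A, (p a - q a)^2 / (p a + 2*q a)) * 3 := hCS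
    _ ≤ (2/3 * klFin p q) * 3 := by
        apply mul_le_mul_of_nonneg_right hkey; norm_num
    _ = 2 * klFin p q := by ring

/-- if `D_KL(π(·|z) ‖ β(·|z)) ≤ ε` for all `z` and `|Q| ≤ M`, then the
Bellman operator gap is bounded by `γ · M · √(2ε)`. -/
theorem bellman_gap_le_sqrt_kl
    {Z A : Type*} [Fintype Z] [Fintype A] [Nonempty Z] [Nonempty A]
    (F : Z × A → Z) (R : Z × A → ℝ) (γ : ℝ) (hγ0 : 0 < γ) (hγ1 : γ < 1)
    (π β : Z → A → ℝ)
    (hπ0 : ∀ z a, 0 ≤ π z a) (hπ1 : ∀ z, ∑ a : A, π z a = 1)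
    (hβ0 : ∀ z a, 0 < β z a) (hβ1 : ∀ z, ∑ a : A, β z a = 1)
    (Q : Z × A → ℝ) (M : ℝ) (hQ : ∀ z a, |Q (z, a)| ≤ M)
    (ε : ℝ) (hε : 0 ≤ ε) (hKL : ∀ z, klFin (π z) (β z) ≤ ε)
    (z : Z) (a : A) :
    |bellman F R γ π Q (z, a) - bellman F R γ β Q (z, a)| ≤
      γ * M * Real.sqrt (2 * ε) := by
  set w := F (z, a) with hw
  have hM : 0 ≤ M := le_trans (abs_nonneg _) (hQ z a)
  set L := ∑ a' : A, |π w a' - β w a'| with hL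
  have hL0 : 0 ≤ L := Finset.sum_nonneg fun a' _ => abs_nonneg _
  have hLsq : L^2 ≤ 2 * ε := by
    calc L^2 ≤ 2 * klFin (π w) (β w) :=
          pinsker (π w) (β w) (hπ0 w) (hπ1 w) (hβ0 w) (hβ1 w)
      _ ≤ 2 * ε := by linarith [hKL w]
  have hLle : L ≤ Real.sqrt (2 * ε) := by
    rw [show L = Real.sqrt (L^2) from (Real.sqrt_sq hL0).symm]
    exact Real.sqrt_le_sqrt hLsq
  have hdiff : bellman F R γ π Q (z, a) - bellman F R γ β Q (z, a)
      = γ * ∑ a' : A, (π w a' - β w a') * Q (w, a') := by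
    simp only [bellman, ← hw]
    rw [show ∀ r x y : ℝ, r + γ*x - (r + γ*y) = γ*(x-y) from fun r x y => by ring,
      ← Finset.sum_sub_distrib]
    congr 1
    apply Finset.sum_congr rfl
    intro a' _
    ring
  rw [hdiff, abs_mul, abs_of_pos hγ0]
  have hsum : |∑ a' : A, (π w a' - β w a') * Q (w, a')| ≤ L * M := by
    calc |∑ a' : A, (π w a' - β w a') * Q (w, a')|
        ≤ ∑ a' : A, |(π w a' - β w a') * Q (w, a')| := Finset.abs_sum_le_sum_abs _ _
      _ ≤ ∑ a' : A, |π w a' - β w a'| * M := by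
          apply Finset.sum_le_sum
          intro a' _
          rw [abs_mul]
          exact mul_le_mul_of_nonneg_left (hQ w a') (abs_nonneg _)
      _ = L * M := by rw [← Finset.sum_mul]
  calc γ * |∑ a' : A, (π w a' - β w a') * Q (w, a')|
      ≤ γ * (L * M) := mul_le_mul_of_nonneg_left hsum hγ0.le
    _ ≤ γ * (Real.sqrt (2*ε) * M) :=
        mul_le_mul_of_nonneg_left (mul_le_mul_of_nonneg_right hLle hM) hγ0.le
    _ = γ * M * Real.sqrt (2*ε) := by ring
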